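/- For the multinomial logistic loss, the following identity holds for any Θ, Θ⋆ ∈ ℝ^{K×d}: ℓ_s(Θ⋆) = ℓ_s(Θ) − KL( μ(x_s, Θ⋆), μ(x_s, Θ) ) + ξ_sᵀ (Θ − Θ⋆) x_s, where ξ_s = y_s − μ(x_s, Θ⋆) ∈ ℝ^K and KL(p, q) denotes the KL divergence between the (K+1)-categorical distributions with class probabilities (1−Σ_k p_k, p_1, …, p_K) and (1−Σ_k q_k, q_1, …, q_K). -/

import Mathlib

open scoped RealInnerProductSpace

/-- The multinomial logit probability
`μ_k(x, Θ) = exp(⟨x, θ^{(k)}⟩) / (1 + Σ_j exp(⟨x, θ^{(j)}⟩))`, where `Θ` is given by its rows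
`θ^{(1)}, …, θ^{(K)}`. -/
noncomputable def mnlP {K d : ℕ} (x : EuclideanSpace ℝ (Fin d))
    (Θ : Fin K → EuclideanSpace ℝ (Fin d)) (k : Fin K) : ℝ :=
  Real.exp ⟪x, Θ k⟫ / (1 + ∑ j, Real.exp ⟪x, Θ j⟫)

/-- The multinomial logistic (softmax cross-entropy) loss
`ℓ(Θ) = −Σ_{k=0}^K y_k log μ_k(x, Θ)` with `y_0 = 1 − Σ_k y_k` and `μ_0 = 1 − Σ_j μ_j`. -/
noncomputable def mnlLoss {K d : ℕ} (x : EuclideanSpace ℝ (Fin d)) (y : Fin K → ℝ)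
    (Θ : Fin K → EuclideanSpace ℝ (Fin d)) : ℝ :=
  -((1 - ∑ k, y k) * Real.log (1 - ∑ j, mnlP x Θ j)) - ∑ k, y k * Real.log (mnlP x Θ k)

/-- KL divergence between the `(K+1)`-categorical distributions with class probabilities
`(1 − Σ_k p_k, p_1, …, p_K)` and `(1 − Σ_k q_k, q_1, …, q_K)`. -/
noncomputable def klCat {K : ℕ} (p q : Fin K → ℝ) : ℝ :=
  (1 - ∑ k, p k) * Real.log ((1 - ∑ k, p k) / (1 - ∑ k, q k))
    + ∑ k, p k * Real.log (p k / q k)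

lemma mnlP_one_sub {K d : ℕ} (x : EuclideanSpace ℝ (Fin d))
    (Θ : Fin K → EuclideanSpace ℝ (Fin d)) :
    1 - ∑ j, mnlP x Θ j = 1 / (1 + ∑ j, Real.exp ⟪x, Θ j⟫) := by
  have hS : (0:ℝ) < 1 + ∑ j, Real.exp ⟪x, Θ j⟫ := by positivity
  simp only [mnlP, ← Finset.sum_div]
  field_simp
  ring

lemma key_alg {K : ℕ} (Ls Lt Ps : ℝ) (a b yy P : Fin K → ℝ)
    (hPs : ∑ k, P k = 1 - Ps) :
    -((1 - ∑ k, yy k) * (-Ls)) - ∑ k, yy k * (a k - Ls)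
      = (-((1 - ∑ k, yy k) * (-Lt)) - ∑ k, yy k * (b k - Lt))
        - (Ps * (Lt - Ls) + ∑ k, P k * ((a k - Ls) - (b k - Lt)))
        + ∑ k, (yy k - P k) * (b k - a k) := by
  simp only [mul_sub, sub_mul, Finset.sum_sub_distrib, ← Finset.sum_mul, ← Finset.mul_sum, hPs]
  ring

/-- decomposition of the multinomial logistic loss at the true parameter:
`ℓ_s(Θ⋆) = ℓ_s(Θ) − KL(μ(x_s, Θ⋆), μ(x_s, Θ)) + ξ_sᵀ (Θ − Θ⋆) x_s` with
`ξ_s = y_s − μ(x_s, Θ⋆)`. -/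
theorem stmt_10 {K d : ℕ} (x : EuclideanSpace ℝ (Fin d))
    (y : Fin K → ℝ) (hy : ∀ k, y k = 0 ∨ y k = 1) (hy1 : ∑ k, y k ≤ 1)
    (Θstar Θ : Fin K → EuclideanSpace ℝ (Fin d)) :
    mnlLoss x y Θstar =
      mnlLoss x y Θ - klCat (fun k => mnlP x Θstar k) (fun k => mnlP x Θ k)
        + ∑ k, (y k - mnlP x Θstar k) * ⟪x, Θ k - Θstar k⟫ := by
  set Ss : ℝ := 1 + ∑ j, Real.exp ⟪x, Θstar j⟫ with hSsdef
  set St : ℝ := 1 + ∑ j, Real.exp ⟪x, Θ j⟫ with hStdef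
  have hSs : (0:ℝ) < Ss := by positivity
  have hSt : (0:ℝ) < St := by positivity
  have h1s : 1 - ∑ j, mnlP x Θstar j = 1 / Ss := mnlP_one_sub x Θstar
  have h1t : 1 - ∑ j, mnlP x Θ j = 1 / St := mnlP_one_sub x Θ
  have hlogPs : ∀ k, Real.log (mnlP x Θstar k) = ⟪x, Θstar k⟫ - Real.log Ss := by
    intro k
    rw [mnlP, ← hSsdef, Real.log_div (Real.exp_ne_zero _) (ne_of_gt hSs), Real.log_exp]
  have hlogPt : ∀ k, Real.log (mnlP x Θ k) = ⟪x, Θ k⟫ - Real.log St := by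
    intro k
    rw [mnlP, ← hStdef, Real.log_div (Real.exp_ne_zero _) (ne_of_gt hSt), Real.log_exp]
  have hPpos : ∀ k, (0:ℝ) < mnlP x Θstar k := by
    intro k; rw [mnlP, ← hSsdef]; positivity
  have hQpos : ∀ k, (0:ℝ) < mnlP x Θ k := by
    intro k; rw [mnlP, ← hStdef]; positivity
  have hlogRatio : ∀ k, Real.log (mnlP x Θstar k / mnlP x Θ k)
      = (⟪x, Θstar k⟫ - Real.log Ss) - (⟪x, Θ k⟫ - Real.log St) := by
    intro k
    rw [Real.log_div (ne_of_gt (hPpos k)) (ne_of_gt (hQpos k)), hlogPs, hlogPt]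
  have hlog0 : Real.log ((1/Ss) / (1/St)) = -Real.log Ss - (-Real.log St) := by
    rw [Real.log_div (by positivity) (by positivity), one_div, one_div,
      Real.log_inv, Real.log_inv]
  have hinner : ∀ k : Fin K, ⟪x, Θ k - Θstar k⟫ = ⟪x, Θ k⟫ - ⟪x, Θstar k⟫ := by
    intro k; exact inner_sub_right x (Θ k) (Θstar k)
  have hPsum : ∑ k, mnlP x Θstar k = 1 - 1 / Ss := by
    have := h1s; linarith
  have hls : Real.log (1 / Ss) = -Real.log Ss := by rw [one_div, Real.log_inv]
  have hlt : Real.log (1 / St) = -Real.log St := by rw [one_div, Real.log_inv]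
  unfold mnlLoss klCat
  simp only [h1s, h1t, hlogPs, hlogPt, hlogRatio, hlog0, hls, hlt, hinner]
  have := key_alg (K := K) (Real.log Ss) (Real.log St) (1 / Ss)
    (fun k => ⟪x, Θstar k⟫) (fun k => ⟪x, Θ k⟫) y (fun k => mnlP x Θstar k) hPsum
  linarith [this]
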